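/- Let E := Σ_{m≥0} (−X)^m/m! ∈ ℝ[[X]] (the formal power series of e^{−X}) and V := X²/2 − (1−E)²/2, a formal power series of order 3. Then for every n ∈ ℕ, Σ_{k=0}^{2n} ((2(n+k)−1)!!/k!) · [X^{2(n+k)}](V^k) = (2n−1)!!; that is, F[−(1−e^{−X})²/2](ħ) = Σ_{n≥0} (2n−1)!! ħⁿ. (In particular, the exponential growth rate of these coefficients is not governed by the value of the action at its saddle points, since the curve y²/2 = (1−e^{−x})²/2 is singular there.) -/

import Mathlib

/-- `dfac m` is the odd double factorial `(2m-1)!! = (2m)!/(2^m m!)` as a real number. -/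
noncomputable def dfac (m : ℕ) : ℝ := ((2 * m).factorial : ℝ) / (2 ^ m * (m.factorial : ℝ))

/-- The formal power series of `e^{-X}`, namely `Σ_{m≥0} (-X)^m/m!`. -/
noncomputable def EPS : PowerSeries ℝ :=
  PowerSeries.mk fun m => (-1 : ℝ) ^ m / (m.factorial : ℝ)

open PowerSeries Finset

noncomputable def Vs : PowerSeries ℝ :=
  PowerSeries.C (R := ℝ) (1 / 2) * PowerSeries.X ^ 2 - PowerSeries.C (R := ℝ) (1 / 2) * (1 - EPS) ^ 2

noncomputable def T (f : PowerSeries ℝ) (n : ℕ) : ℝ :=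
  ∑ k ∈ Finset.range (2 * n + 1),
    dfac (n + k) / (k.factorial : ℝ) * PowerSeries.coeff (R := ℝ) (2 * (n + k)) (f * Vs ^ k)

lemma dfac_zero : dfac 0 = 1 := by simp [dfac]

lemma dfac_succ (m : ℕ) : dfac (m + 1) = (2 * m + 1) * dfac m := by
  have h1 : (2 * (m + 1)) = (2 * m + 1) + 1 := by ring
  rw [dfac, dfac, h1, Nat.factorial_succ, Nat.factorial_succ, Nat.factorial_succ]
  push_cast
  have h2 : ((2 * m).factorial : ℝ) ≠ 0 := by positivity
  have h3 : (m.factorial : ℝ) ≠ 0 := by positivity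
  have h4 : (2 : ℝ) ^ m ≠ 0 := by positivity
  field_simp
  ring

lemma coeff_EPS (m : ℕ) : PowerSeries.coeff (R := ℝ) m EPS = (-1 : ℝ) ^ m / (m.factorial : ℝ) := by
  simp [EPS]

lemma EPS_eq : EPS = rescale (-1) (PowerSeries.exp ℝ) := by
  ext m
  rw [coeff_EPS, coeff_rescale, coeff_exp]
  simp [div_eq_mul_inv]

lemma EPS_mul_exp : EPS * PowerSeries.exp ℝ = 1 := by
  rw [EPS_eq, mul_comm]
  have := PowerSeries.exp_mul_exp_eq_exp_add (1 : ℝ) (-1)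
  simp only [rescale_one, RingHom.id_apply] at this
  rw [this]
  norm_num [rescale_zero]

lemma D_exp : derivative ℝ (PowerSeries.exp ℝ) = PowerSeries.exp ℝ := by
  ext m
  rw [coeff_derivative, coeff_exp, coeff_exp]
  have h3 : (m.factorial : ℝ) ≠ 0 := by positivity
  have h5 : ((m:ℝ) + 1) ≠ 0 := by positivity
  simp only [eq_ratCast, Rat.cast_div, Rat.cast_one, Rat.cast_natCast]
  rw [Nat.factorial_succ]
  push_cast
  field_simp

lemma D_EPS : derivative ℝ EPS = -EPS := by
  ext m
  rw [coeff_derivative, coeff_EPS, map_neg, coeff_EPS]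
  have h3 : (m.factorial : ℝ) ≠ 0 := by positivity
  have h5 : ((m:ℝ) + 1) ≠ 0 := by positivity
  rw [Nat.factorial_succ, pow_succ]
  push_cast
  field_simp

lemma coeff_Vs_small {i : ℕ} (h : i < 3) : PowerSeries.coeff (R := ℝ) i Vs = 0 := by
  interval_cases i <;>
    simp [Vs, sq, PowerSeries.coeff_mul, Finset.Nat.sum_antidiagonal_eq_sum_range_succ_mk,
      Finset.sum_range_succ, coeff_EPS, coeff_one, Nat.factorial, EPS]

lemma coeff_mul_eq_zero {f g : PowerSeries ℝ} {a b q : ℕ}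
    (hf : ∀ i < a, PowerSeries.coeff (R := ℝ) i f = 0)
    (hg : ∀ j < b, PowerSeries.coeff (R := ℝ) j g = 0) (h : q < a + b) :
    PowerSeries.coeff (R := ℝ) q (f * g) = 0 := by
  rw [PowerSeries.coeff_mul]
  apply Finset.sum_eq_zero
  rintro ⟨i, j⟩ hij
  rw [Finset.HasAntidiagonal.mem_antidiagonal] at hij
  rcases lt_or_ge i a with hi | hi
  · rw [hf i hi, zero_mul]
  · rw [hg j (by omega), mul_zero]

lemma coeff_Vs_pow {k q : ℕ} (h : q < 3 * k) : PowerSeries.coeff (R := ℝ) q (Vs ^ k) = 0 := by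
  induction k generalizing q with
  | zero => omega
  | succ k ih =>
    rw [pow_succ, mul_comm]
    exact coeff_mul_eq_zero (fun i hi => coeff_Vs_small hi) (fun j hj => ih hj) (by omega)

lemma coeff_g_Vs_pow {g : PowerSeries ℝ} {a k q : ℕ}
    (hg : ∀ i < a, PowerSeries.coeff (R := ℝ) i g = 0) (h : q < a + 3 * k) :
    PowerSeries.coeff (R := ℝ) q (g * Vs ^ k) = 0 :=
  coeff_mul_eq_zero hg (fun _ hj => coeff_Vs_pow hj) h

lemma coeff_f_Vs_pow (f : PowerSeries ℝ) {k q : ℕ} (h : q < 3 * k) :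
    PowerSeries.coeff (R := ℝ) q (f * Vs ^ k) = 0 :=
  coeff_g_Vs_pow (a := 0) (fun i hi => absurd hi (Nat.not_lt_zero i)) (by omega)

lemma sum_drop {N M : ℕ} (h : M ≤ N) (F : ℕ → ℝ) (hF : ∀ k, M ≤ k → k < N → F k = 0) :
    ∑ k ∈ Finset.range N, F k = ∑ k ∈ Finset.range M, F k :=
  (Finset.sum_subset (Finset.range_subset_range.2 h)
    (fun k hk hk' => hF k (by simpa using hk') (Finset.mem_range.1 hk))).symm

lemma T_ext (f : PowerSeries ℝ) (n : ℕ) {M : ℕ} (h : 2 * n + 1 ≤ M) :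
    T f n = ∑ k ∈ Finset.range M,
      dfac (n + k) / (k.factorial : ℝ) * PowerSeries.coeff (R := ℝ) (2 * (n + k)) (f * Vs ^ k) := by
  rw [T, ← sum_drop h]
  intro k hk _
  rw [coeff_f_Vs_pow f (by omega), mul_zero]

lemma key_deriv (g : PowerSeries ℝ) (j : ℕ) :
    ((2 * j : ℝ) + 1) * PowerSeries.coeff (R := ℝ) (2 * j + 1) g
      = PowerSeries.coeff (R := ℝ) (2 * j) (derivative ℝ g) := by
  rw [coeff_derivative]
  push_cast
  ring

lemma Dmul (f : PowerSeries ℝ) (k : ℕ) :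
    derivative ℝ (f * Vs ^ k)
      = derivative ℝ f * Vs ^ k + (k : ℝ) • ((derivative ℝ Vs * f) * Vs ^ (k - 1)) := by
  rw [Derivation.leibniz, Derivation.leibniz_pow]
  simp only [smul_eq_mul, nsmul_eq_mul, Nat.cast_smul_eq_nsmul]
  ring

lemma hDV0 : ∀ i < 2, PowerSeries.coeff (R := ℝ) i (derivative ℝ Vs) = 0 := by
  intro i hi
  rw [coeff_derivative, coeff_Vs_small (by omega), zero_mul]

lemma lemA (f : PowerSeries ℝ) (m : ℕ) :
    T (PowerSeries.X * f) (m + 1)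
      = T (derivative ℝ f) m + T (derivative ℝ Vs * f) (m + 1) := by
  have hstep : T (PowerSeries.X * f) (m + 1)
      = (∑ k ∈ Finset.range (2 * (m + 1) + 1),
          dfac (m + k) / (k.factorial : ℝ)
            * PowerSeries.coeff (R := ℝ) (2 * (m + k)) (derivative ℝ f * Vs ^ k))
        + ∑ k ∈ Finset.range (2 * (m + 1) + 1),
            dfac (m + k) / (k.factorial : ℝ)
              * ((k : ℝ) * PowerSeries.coeff (R := ℝ) (2 * (m + k))
                  ((derivative ℝ Vs * f) * Vs ^ (k - 1))) := by
    rw [T, ← Finset.sum_add_distrib]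
    apply Finset.sum_congr rfl
    intro k hk
    have e1 : 2 * (m + 1 + k) = 2 * (m + k) + 1 + 1 := by ring
    have e2 : m + 1 + k = (m + k) + 1 := by omega
    rw [e1, mul_assoc, coeff_succ_X_mul, e2, dfac_succ]
    have e3 := key_deriv (f * Vs ^ k) (m + k)
    have e4 := Dmul f k
    rw [e4, map_add, map_smul] at e3
    simp only [smul_eq_mul] at e3
    push_cast at e3 ⊢
    linear_combination dfac (m + k) / (k.factorial : ℝ) * e3
  rw [hstep]
  congr 1
  · exact (T_ext (derivative ℝ f) m (by omega)).symm
  · rw [Finset.sum_range_succ']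
    simp only [Nat.cast_zero, zero_mul, mul_zero, add_zero]
    have e5 : 2 * (m + 1) + 1 = (2 * (m + 1)) + 1 := rfl
    rw [T, Finset.sum_range_succ]
    have hlast : PowerSeries.coeff (R := ℝ) (2 * (m + 1 + 2 * (m + 1)))
        ((derivative ℝ Vs * f) * Vs ^ (2 * (m + 1))) = 0 := by
      apply coeff_g_Vs_pow (a := 2)
      · exact fun i hi => coeff_mul_eq_zero hDV0 (b := 0) (fun j hj => absurd hj (Nat.not_lt_zero j)) (by omega)
      · omega
    rw [hlast, mul_zero, add_zero]
    apply Finset.sum_congr rfl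
    intro j hj
    have e6 : m + (j + 1) = m + 1 + j := by omega
    have e7 : (j + 1) - 1 = j := rfl
    rw [e6, e7, Nat.factorial_succ]
    have h1 : (j.factorial : ℝ) ≠ 0 := by positivity
    have h2 : ((j : ℝ) + 1) ≠ 0 := by positivity
    push_cast
    field_simp

lemma lemB (f : PowerSeries ℝ) (m : ℕ) :
    T (PowerSeries.X ^ 2 * f) (m + 1) - 2 * T (Vs * f) (m + 1) = (2 * m + 1) * T f m := by
  have hS1 : T (PowerSeries.X ^ 2 * f) (m + 1)
      = ∑ k ∈ Finset.range (2 * m + 1),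
          ((2 * (m + k) : ℝ) + 1) * (dfac (m + k) / (k.factorial : ℝ)
            * PowerSeries.coeff (R := ℝ) (2 * (m + k)) (f * Vs ^ k)) := by
    rw [T]
    rw [show 2 * (m + 1) + 1 = (2 * m + 1) + 2 by ring, Finset.sum_range_succ,
      Finset.sum_range_succ]
    have hz : ∀ k, 2 * m < k →
        PowerSeries.coeff (R := ℝ) (2 * (m + 1 + k)) (PowerSeries.X ^ 2 * f * Vs ^ k) = 0 := by
      intro k hk
      rw [mul_assoc]
      have : 2 * (m + 1 + k) = (2 * (m + k)) + 2 := by ring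
      rw [this, coeff_X_pow_mul]
      exact coeff_f_Vs_pow f (by omega)
    rw [hz _ (by omega), hz _ (by omega), mul_zero, mul_zero, add_zero, add_zero]
    apply Finset.sum_congr rfl
    intro k hk
    have e1 : 2 * (m + 1 + k) = (2 * (m + k)) + 2 := by ring
    rw [e1, mul_assoc, coeff_X_pow_mul, show m + 1 + k = (m + k) + 1 from by omega, dfac_succ]
    push_cast
    ring
  have hS2 : T (Vs * f) (m + 1)
      = ∑ k ∈ Finset.range (2 * m + 1),
          (k : ℝ) * (dfac (m + k) / (k.factorial : ℝ)
            * PowerSeries.coeff (R := ℝ) (2 * (m + k)) (f * Vs ^ k)) := by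
    set G : ℕ → ℝ := fun j =>
      (j : ℝ) * (dfac (m + j) / (j.factorial : ℝ)
        * PowerSeries.coeff (R := ℝ) (2 * (m + j)) (f * Vs ^ j)) with hG
    have h1 : T (Vs * f) (m + 1) = ∑ k ∈ Finset.range (2 * (m + 1) + 1), G (k + 1) := by
      rw [T]
      apply Finset.sum_congr rfl
      intro k hk
      have e2 : Vs * f * Vs ^ k = f * Vs ^ (k + 1) := by rw [pow_succ]; ring
      rw [e2, hG]
      simp only
      rw [show m + 1 + k = m + (k + 1) from by omega, Nat.factorial_succ]
      have h1' : (k.factorial : ℝ) ≠ 0 := by positivity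
      have h2' : ((k : ℝ) + 1) ≠ 0 := by positivity
      push_cast
      field_simp
    rw [h1]
    have hz : ∀ k, 2 * m ≤ k → k < 2 * (m + 1) + 1 → G (k + 1) = 0 := by
      intro k hk _
      simp only [hG]
      rw [coeff_f_Vs_pow f (by omega), mul_zero, mul_zero]
    rw [sum_drop (by omega) (fun k => G (k + 1)) hz]
    have h0 : G 0 = 0 := by simp [hG]
    have := Finset.sum_range_succ' G (2 * m)
    rw [h0, add_zero] at this
    rw [← this]
  rw [hS1, hS2, T, Finset.mul_sum, Finset.mul_sum, ← Finset.sum_sub_distrib]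
  apply Finset.sum_congr rfl
  intro k hk
  ring

lemma half2 : (PowerSeries.C (R := ℝ) (1 / 2)) * 2 = 1 := by
  rw [show (2 : PowerSeries ℝ) = PowerSeries.C (R := ℝ) 2 from (map_ofNat _ 2).symm, ← map_mul]
  norm_num

lemma DVs_eq : derivative ℝ Vs = PowerSeries.X - (1 - EPS) * EPS := by
  have hsq : ∀ g : PowerSeries ℝ, derivative ℝ (g ^ 2) = 2 * g * derivative ℝ g := by
    intro g
    rw [sq, Derivation.leibniz]
    simp only [smul_eq_mul]
    ring
  unfold Vs
  rw [map_sub, Derivation.leibniz, Derivation.leibniz, hsq, hsq]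
  simp only [derivative_C, derivative_X, smul_eq_mul, mul_zero, zero_mul, map_sub,
    Derivation.map_one_eq_zero, D_EPS, zero_sub, mul_one, add_zero, mul_neg, neg_neg,
    sub_neg_eq_add, zero_add, smul_zero]
  linear_combination (PowerSeries.X - (1 - EPS) * EPS) * half2

lemma T_add (f g : PowerSeries ℝ) (n : ℕ) : T (f + g) n = T f n + T g n := by
  simp [T, add_mul, map_add, mul_add, Finset.sum_add_distrib]

lemma T_sub (f g : PowerSeries ℝ) (n : ℕ) : T (f - g) n = T f n - T g n := by
  simp [T, sub_mul, map_sub, mul_sub, Finset.sum_sub_distrib]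

lemma lemB' (f : PowerSeries ℝ) (m : ℕ) :
    T ((1 - EPS) ^ 2 * f) (m + 1) = (2 * m + 1) * T f m := by
  have e : (1 - EPS) ^ 2 * f = PowerSeries.X ^ 2 * f - (Vs * f + Vs * f) := by
    simp only [Vs]
    linear_combination ((PowerSeries.X ^ 2 - (1 - EPS) ^ 2) * f) * half2
  rw [e, T_sub, T_add, ← lemB f m]
  ring

lemma lemA' (f : PowerSeries ℝ) (m : ℕ) :
    T (PowerSeries.X * f - derivative ℝ Vs * f) (m + 1) = T (derivative ℝ f) m := by
  rw [T_sub, lemA f m]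
  ring

lemma hD1 : derivative ℝ (1 - EPS) = EPS := by
  rw [map_sub, Derivation.map_one_eq_zero, D_EPS]; ring

lemma Tb (j : ℕ) (hj : 1 ≤ j) : T EPS j = 0 := by
  have h1 := lemA' (1 - EPS) j
  rw [hD1, DVs_eq] at h1
  have e1 : PowerSeries.X * (1 - EPS) - (PowerSeries.X - (1 - EPS) * EPS) * (1 - EPS)
      = (1 - EPS) ^ 2 * EPS := by ring
  rw [e1, lemB' EPS j] at h1
  have h2 : (2 * (j : ℝ)) * T EPS j = 0 := by linear_combination h1
  have hj' : (2 * (j : ℝ)) ≠ 0 := by positivity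
  exact (mul_eq_zero.mp h2).resolve_left hj'

lemma Ta_succ (j : ℕ) : T 1 (j + 1) = (2 * (j : ℝ) + 1) * T 1 j := by
  have h2 := lemA' (PowerSeries.exp ℝ) j
  rw [D_exp, DVs_eq] at h2
  have e2 : PowerSeries.X * PowerSeries.exp ℝ
      - (PowerSeries.X - (1 - EPS) * EPS) * PowerSeries.exp ℝ = 1 - EPS := by
    linear_combination (1 - EPS) * EPS_mul_exp
  rw [e2] at h2
  have h3 := lemA' (PowerSeries.exp ℝ - 1) j
  have hDe : derivative ℝ (PowerSeries.exp ℝ - 1) = PowerSeries.exp ℝ := by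
    rw [map_sub, Derivation.map_one_eq_zero, D_exp]; ring
  rw [hDe, DVs_eq] at h3
  have e3 : PowerSeries.X * (PowerSeries.exp ℝ - 1)
      - (PowerSeries.X - (1 - EPS) * EPS) * (PowerSeries.exp ℝ - 1) = (1 - EPS) ^ 2 := by
    linear_combination (1 - EPS) * EPS_mul_exp
  rw [e3] at h3
  have h4 : T (1 - EPS) (j + 1) = T 1 (j + 1) - T EPS (j + 1) := T_sub 1 EPS (j + 1)
  have h5 : T EPS (j + 1) = 0 := Tb (j + 1) (by omega)
  have h6 := lemB' 1 j
  rw [mul_one] at h6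
  have h7 : T ((1 - EPS) ^ 2) (j + 1) = T 1 (j + 1) := by
    rw [h3, ← h2, h4, h5]; ring
  rw [← h7, h6]

lemma Ta0 : T 1 0 = 1 := by
  simp [T, dfac_zero]

lemma Ta (n : ℕ) : T 1 n = dfac n := by
  induction n with
  | zero => rw [Ta0, dfac_zero]
  | succ j ih => rw [Ta_succ, ih, dfac_succ]

/-- With `V = X²/2 - (1-e^{-X})²/2` (a series of order 3), the `n`-th coefficient of
`F[-(1-e^{-X})²/2]` equals `(2n-1)!!`. -/
theorem stmt11 (n : ℕ) :
    ∑ k ∈ Finset.range (2 * n + 1),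
        dfac (n + k) / (k.factorial : ℝ) *
          PowerSeries.coeff (R := ℝ) (2 * (n + k))
            ((PowerSeries.C (R := ℝ) (1 / 2) * PowerSeries.X ^ 2 -
                PowerSeries.C (R := ℝ) (1 / 2) * (1 - EPS) ^ 2) ^ k)
      = dfac n := by
  rw [← Ta n, T]
  exact Finset.sum_congr rfl fun k _ => by rw [one_mul, Vs]
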